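/- Let X be a measurable space, m a nonnegative measure on X×X, f : X → ℂ measurable with |f(x)| ≤ C for all x ∈ X and ∫ |f(x) − f(y)|² dm < ∞, and a : X×X → ℝ measurable with ∫ a² dm < ∞ and ∫ |f(y)|² a(x,y)⁴ dm(x,y) < ∞. Set I₁(x,y) = f(x) − f(y) − i a(x,y) f(y) and I₂(x,y) = f(x) − e^{i a(x,y)} f(y). Then | ∫ |I₁|² dm − ∫ |I₂|² dm | ≤ 2 ( ∫ |f(y)|² a(x,y)⁴ dm )^{1/2} · ( ∫ |f(x) − f(y)|² dm + C² ∫ a² dm )^{1/2}. -/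

import Mathlib

open MeasureTheory

private lemma aux_F_nonneg (t : ℝ) :
    0 ≤ t ^ 4 / 4 + 2 * Real.cos t + 2 * t * Real.sin t - t ^ 2 - 2 := by
  set F : ℝ → ℝ := fun t => t ^ 4 / 4 + 2 * Real.cos t + 2 * t * Real.sin t - t ^ 2 - 2 with hF
  have hder : ∀ x : ℝ, HasDerivAt F (x ^ 3 + 2 * x * Real.cos x - 2 * x) x := by
    intro x
    have h1 : HasDerivAt (fun y : ℝ => y ^ 4 / 4) ((4 : ℕ) * x ^ 3 / 4) x :=
      (hasDerivAt_pow 4 x).div_const 4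
    have h2 : HasDerivAt (fun y : ℝ => 2 * Real.cos y) (2 * (-Real.sin x)) x :=
      (Real.hasDerivAt_cos x).const_mul 2
    have h3 : HasDerivAt (fun y : ℝ => 2 * y * Real.sin y)
        ((2 * 1) * Real.sin x + 2 * x * Real.cos x) x :=
      ((hasDerivAt_id x).const_mul 2).mul (Real.hasDerivAt_sin x)
    have h4 : HasDerivAt (fun y : ℝ => y ^ 2) ((2 : ℕ) * x ^ 1) x := hasDerivAt_pow 2 x
    have := (((h1.add h2).add h3).sub h4).sub_const 2
    refine this.congr_deriv ?_
    push_cast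
    ring
  have hmono : MonotoneOn F (Set.Ici (0 : ℝ)) := by
    apply monotoneOn_of_deriv_nonneg (convex_Ici 0)
    · exact (Differentiable.continuous fun x => (hder x).differentiableAt).continuousOn
    · exact fun x _ => (hder x).differentiableAt.differentiableWithinAt
    · intro x hx
      rw [interior_Ici] at hx
      rw [(hder x).deriv]
      have hc := Real.one_sub_sq_div_two_le_cos (x := x)
      have hx0 : (0 : ℝ) ≤ x := le_of_lt hx
      nlinarith
  have hF0 : F 0 = 0 := by simp [hF]
  have heven : F (-t) = F t := by simp [hF]; ring
  rcases le_total 0 t with h | h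
  · have := hmono (Set.self_mem_Ici) (Set.mem_Ici.2 h) h
    rw [hF0] at this
    exact this
  · have h0 : (0:ℝ) ≤ -t := by linarith
    have := hmono (Set.self_mem_Ici) (Set.mem_Ici.2 h0) h0
    rw [hF0, heven] at this
    exact this

private lemma norm_exp_I_mul_sub_one_sub_le (t : ℝ) :
    ‖Complex.exp (Complex.I * t) - 1 - Complex.I * t‖ ≤ t ^ 2 / 2 := by
  have key : Complex.exp (Complex.I * t) - 1 - Complex.I * t =
      ((Real.cos t - 1 : ℝ) : ℂ) + ((Real.sin t - t : ℝ) : ℂ) * Complex.I := by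
    rw [mul_comm Complex.I (t : ℂ), Complex.exp_mul_I, ← Complex.ofReal_cos,
      ← Complex.ofReal_sin]
    push_cast
    ring
  rw [key, Complex.norm_add_mul_I]
  have h2 : (Real.cos t - 1) ^ 2 + (Real.sin t - t) ^ 2 ≤ (t ^ 2 / 2) ^ 2 := by
    have h := aux_F_nonneg t
    have hs := Real.sin_sq_add_cos_sq t
    nlinarith
  calc Real.sqrt ((Real.cos t - 1) ^ 2 + (Real.sin t - t) ^ 2)
      ≤ Real.sqrt ((t ^ 2 / 2) ^ 2) := Real.sqrt_le_sqrt h2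
    _ = t ^ 2 / 2 := by rw [Real.sqrt_sq (by positivity)]

private lemma norm_exp_I_mul_sub_one_le (t : ℝ) :
    ‖Complex.exp (Complex.I * t) - 1‖ ≤ |t| := by
  have key : Complex.exp (Complex.I * t) - 1 =
      ((Real.cos t - 1 : ℝ) : ℂ) + ((Real.sin t : ℝ) : ℂ) * Complex.I := by
    rw [mul_comm Complex.I (t : ℂ), Complex.exp_mul_I, ← Complex.ofReal_cos,
      ← Complex.ofReal_sin]
    push_cast
    ring
  rw [key, Complex.norm_add_mul_I]
  have h2 : (Real.cos t - 1) ^ 2 + (Real.sin t) ^ 2 ≤ |t| ^ 2 := by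
    have hc := Real.one_sub_sq_div_two_le_cos (x := t)
    have hs := Real.sin_sq_add_cos_sq t
    have habs : |t| ^ 2 = t ^ 2 := sq_abs t
    nlinarith
  calc Real.sqrt ((Real.cos t - 1) ^ 2 + Real.sin t ^ 2)
      ≤ Real.sqrt (|t| ^ 2) := Real.sqrt_le_sqrt h2
    _ = |t| := by rw [Real.sqrt_sq (abs_nonneg t)]

private lemma integral_mul_le_sqrt_mul_sqrt {α : Type*} [MeasurableSpace α] {μ : Measure α}
    {g k : α → ℝ} (hg : AEStronglyMeasurable g μ) (hk : AEStronglyMeasurable k μ)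
    (hg0 : ∀ x, 0 ≤ g x) (hk0 : ∀ x, 0 ≤ k x)
    (hg2 : Integrable (fun x => g x ^ 2) μ) (hk2 : Integrable (fun x => k x ^ 2) μ) :
    ∫ x, g x * k x ∂μ ≤ Real.sqrt (∫ x, g x ^ 2 ∂μ) * Real.sqrt (∫ x, k x ^ 2 ∂μ) := by
  have hpq : (2 : ℝ).HolderConjugate 2 := Real.HolderConjugate.two_two
  have h2 : ENNReal.ofReal (2 : ℝ) = 2 := by norm_num
  have hgm : MemLp g (ENNReal.ofReal (2 : ℝ)) μ := by
    rw [h2]; exact (memLp_two_iff_integrable_sq hg).2 hg2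
  have hkm : MemLp k (ENNReal.ofReal (2 : ℝ)) μ := by
    rw [h2]; exact (memLp_two_iff_integrable_sq hk).2 hk2
  have := integral_mul_le_Lp_mul_Lq_of_nonneg hpq
    (Filter.Eventually.of_forall hg0) (Filter.Eventually.of_forall hk0) hgm hkm
  simp_rw [Real.rpow_two] at this
  rw [Real.sqrt_eq_rpow, Real.sqrt_eq_rpow]
  exact this

theorem magnetic_linearization_estimate
    {X : Type*} [MeasurableSpace X] (m : Measure (X × X))
    (f : X → ℂ) (hf : Measurable f) (C : ℝ) (hC : ∀ x, ‖f x‖ ≤ C)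
    (hdf : Integrable (fun p : X × X => ‖f p.1 - f p.2‖ ^ 2) m)
    (a : X × X → ℝ) (ha : Measurable a)
    (ha2 : Integrable (fun p : X × X => a p ^ 2) m)
    (hfa4 : Integrable (fun p : X × X => ‖f p.2‖ ^ 2 * a p ^ 4) m) :
    |(∫ p, ‖f p.1 - f p.2 - Complex.I * (a p : ℂ) * f p.2‖ ^ 2 ∂m) -
        ∫ p, ‖f p.1 - Complex.exp (Complex.I * (a p : ℂ)) * f p.2‖ ^ 2 ∂m| ≤
      2 * Real.sqrt (∫ p, ‖f p.2‖ ^ 2 * a p ^ 4 ∂m) *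
        Real.sqrt ((∫ p, ‖f p.1 - f p.2‖ ^ 2 ∂m) + C ^ 2 * (∫ p, a p ^ 2 ∂m)) := by
  rcases isEmpty_or_nonempty X with hX | hX
  · simp [integral_of_isEmpty]
  have hC0 : 0 ≤ C := le_trans (norm_nonneg _) (hC (Classical.arbitrary X))
  set u : X × X → ℂ := fun p => f p.1 - f p.2 - Complex.I * (a p : ℂ) * f p.2 with hu
  set v : X × X → ℂ := fun p => f p.1 - Complex.exp (Complex.I * (a p : ℂ)) * f p.2 with hv
  set G : X × X → ℝ := fun p => ‖f p.2‖ * a p ^ 2 with hG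
  set K1 : X × X → ℝ := fun p => ‖f p.1 - f p.2‖ with hK1def
  set K2 : X × X → ℝ := fun p => C * |a p| with hK2def
  -- measurability
  have hfm1 : Measurable fun p : X × X => f p.1 := hf.comp measurable_fst
  have hfm2 : Measurable fun p : X × X => f p.2 := hf.comp measurable_snd
  have ham : Measurable fun p : X × X => (a p : ℂ) := Complex.measurable_ofReal.comp ha
  have hum : Measurable u := (hfm1.sub hfm2).sub ((measurable_const.mul ham).mul hfm2)
  have hvm : Measurable v :=
    hfm1.sub ((Complex.measurable_exp.comp (measurable_const.mul ham)).mul hfm2)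
  have hGm : Measurable G := hfm2.norm.mul (ha.pow_const 2)
  have hK1m : Measurable K1 := (hfm1.sub hfm2).norm
  have hK2m : Measurable K2 := (ha.abs).const_mul C
  -- pointwise norm bounds
  have hub : ∀ p, ‖u p‖ ≤ K1 p + K2 p := by
    intro p
    calc ‖u p‖ ≤ ‖f p.1 - f p.2‖ + ‖Complex.I * (a p : ℂ) * f p.2‖ := norm_sub_le _ _
      _ = K1 p + |a p| * ‖f p.2‖ := by
          simp [hK1def, Complex.norm_I, Complex.norm_real]
      _ ≤ K1 p + K2 p := by
          have := mul_le_mul_of_nonneg_left (hC p.2) (abs_nonneg (a p))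
          simp only [hK2def]
          nlinarith
  have hvb : ∀ p, ‖v p‖ ≤ K1 p + K2 p := by
    intro p
    have hv' : v p = (f p.1 - f p.2) - (Complex.exp (Complex.I * (a p : ℂ)) - 1) * f p.2 := by
      simp only [hv]; ring
    rw [hv']
    calc ‖(f p.1 - f p.2) - (Complex.exp (Complex.I * (a p : ℂ)) - 1) * f p.2‖
        ≤ ‖f p.1 - f p.2‖ + ‖(Complex.exp (Complex.I * (a p : ℂ)) - 1) * f p.2‖ :=
          norm_sub_le _ _
      _ = K1 p + ‖Complex.exp (Complex.I * (a p : ℂ)) - 1‖ * ‖f p.2‖ := by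
          rw [norm_mul]
      _ ≤ K1 p + |a p| * C := by
          have := mul_le_mul (norm_exp_I_mul_sub_one_le (a p)) (hC p.2)
            (norm_nonneg _) (abs_nonneg _)
          linarith
      _ = K1 p + K2 p := by rw [mul_comm]
  have hdiff : ∀ p, ‖u p - v p‖ ≤ a p ^ 2 / 2 * ‖f p.2‖ := by
    intro p
    have he : u p - v p = (Complex.exp (Complex.I * (a p : ℂ)) - 1 - Complex.I * (a p : ℂ)) *
        f p.2 := by
      simp only [hu, hv]; ring
    rw [he, norm_mul]
    exact mul_le_mul_of_nonneg_right (norm_exp_I_mul_sub_one_sub_le (a p)) (norm_nonneg _)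
  -- master pointwise estimate
  have hptw : ∀ p, |‖u p‖ ^ 2 - ‖v p‖ ^ 2| ≤ G p * K1 p + G p * K2 p := by
    intro p
    have e : ‖u p‖ ^ 2 - ‖v p‖ ^ 2 = (‖u p‖ - ‖v p‖) * (‖u p‖ + ‖v p‖) := by ring
    rw [e, abs_mul, abs_of_nonneg (show (0:ℝ) ≤ ‖u p‖ + ‖v p‖ by positivity)]
    have h1 : |‖u p‖ - ‖v p‖| ≤ ‖u p - v p‖ := abs_norm_sub_norm_le _ _
    have h2 := hdiff p
    have h3 := hub p
    have h4 := hvb p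
    have hK1n : 0 ≤ K1 p := norm_nonneg _
    have hK2n : 0 ≤ K2 p := mul_nonneg hC0 (abs_nonneg _)
    calc |‖u p‖ - ‖v p‖| * (‖u p‖ + ‖v p‖)
        ≤ (a p ^ 2 / 2 * ‖f p.2‖) * ((K1 p + K2 p) + (K1 p + K2 p)) :=
          mul_le_mul (h1.trans h2) (add_le_add h3 h4)
            (by positivity) (by positivity)
      _ = G p * K1 p + G p * K2 p := by simp only [hG]; ring
  -- integrability
  have hsq : ∀ w : X × X → ℂ, Measurable w → (∀ p, ‖w p‖ ≤ K1 p + K2 p) →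
      Integrable (fun p => ‖w p‖ ^ 2) m := by
    intro w hw hb
    refine Integrable.mono' ((hdf.const_mul 2).add (ha2.const_mul (2 * C ^ 2)))
      ((hw.norm.pow_const 2).aestronglyMeasurable)
      (Filter.Eventually.of_forall fun p => ?_)
    have hb' := hb p
    rw [Real.norm_of_nonneg (by positivity)]
    have hK1n : 0 ≤ K1 p := norm_nonneg _
    have hK2n : 0 ≤ K2 p := mul_nonneg hC0 (abs_nonneg _)
    have hKsq : K2 p ^ 2 = C ^ 2 * a p ^ 2 := by
      simp only [hK2def]; rw [mul_pow, sq_abs]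
    have hwn : 0 ≤ ‖w p‖ := norm_nonneg _
    simp only [hK1def, Pi.add_apply] at hb' hK1n ⊢
    nlinarith [sq_nonneg (K1 p - K2 p), sq_nonneg (‖w p‖),
      mul_self_le_mul_self hwn hb', hKsq]
  have hu2 : Integrable (fun p => ‖u p‖ ^ 2) m := hsq u hum hub
  have hv2 : Integrable (fun p => ‖v p‖ ^ 2) m := hsq v hvm hvb
  have hG2eq : ∀ p, G p ^ 2 = ‖f p.2‖ ^ 2 * a p ^ 4 := by
    intro p; simp only [hG]; ring
  have hG2 : Integrable (fun p => G p ^ 2) m := by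
    have : (fun p : X × X => G p ^ 2) = fun p => ‖f p.2‖ ^ 2 * a p ^ 4 := funext hG2eq
    rw [this]; exact hfa4
  have hK2sq : ∀ p, K2 p ^ 2 = C ^ 2 * a p ^ 2 := by
    intro p; simp only [hK2def]; rw [mul_pow, sq_abs]
  have hK2_2 : Integrable (fun p => K2 p ^ 2) m := by
    have : (fun p : X × X => K2 p ^ 2) = fun p => C ^ 2 * a p ^ 2 := funext hK2sq
    rw [this]; exact ha2.const_mul _
  have hK1_2 : Integrable (fun p => K1 p ^ 2) m := hdf
  have hGK1 : Integrable (fun p => G p * K1 p) m := by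
    refine Integrable.mono' ((hG2.add hK1_2).const_mul (1 / 2))
      ((hGm.mul hK1m).aestronglyMeasurable) (Filter.Eventually.of_forall fun p => ?_)
    have hGn : 0 ≤ G p := by simp only [hG]; positivity
    have hK1n : 0 ≤ K1 p := norm_nonneg _
    rw [Real.norm_of_nonneg (mul_nonneg hGn hK1n)]
    simp only [Pi.add_apply]
    nlinarith [sq_nonneg (G p - K1 p)]
  have hGK2 : Integrable (fun p => G p * K2 p) m := by
    refine Integrable.mono' ((hG2.add hK2_2).const_mul (1 / 2))
      ((hGm.mul hK2m).aestronglyMeasurable) (Filter.Eventually.of_forall fun p => ?_)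
    have hGn : 0 ≤ G p := by simp only [hG]; positivity
    have hK2n : 0 ≤ K2 p := mul_nonneg hC0 (abs_nonneg _)
    rw [Real.norm_of_nonneg (mul_nonneg hGn hK2n)]
    simp only [Pi.add_apply]
    nlinarith [sq_nonneg (G p - K2 p)]
  -- Cauchy–Schwarz
  have hCS1 : ∫ p, G p * K1 p ∂m ≤
      Real.sqrt (∫ p, G p ^ 2 ∂m) * Real.sqrt (∫ p, K1 p ^ 2 ∂m) :=
    integral_mul_le_sqrt_mul_sqrt hGm.aestronglyMeasurable hK1m.aestronglyMeasurable
      (fun p => by simp only [hG]; positivity) (fun p => norm_nonneg _) hG2 hK1_2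
  have hCS2 : ∫ p, G p * K2 p ∂m ≤
      Real.sqrt (∫ p, G p ^ 2 ∂m) * Real.sqrt (∫ p, K2 p ^ 2 ∂m) :=
    integral_mul_le_sqrt_mul_sqrt hGm.aestronglyMeasurable hK2m.aestronglyMeasurable
      (fun p => by simp only [hG]; positivity) (fun p => mul_nonneg hC0 (abs_nonneg _))
      hG2 hK2_2
  -- rewrite the integrals in CS to target forms
  have hIG : ∫ p, G p ^ 2 ∂m = ∫ p, ‖f p.2‖ ^ 2 * a p ^ 4 ∂m :=
    integral_congr_ae (Filter.Eventually.of_forall fun p => hG2eq p)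
  have hIK2 : ∫ p, K2 p ^ 2 ∂m = C ^ 2 * ∫ p, a p ^ 2 ∂m := by
    rw [integral_congr_ae (Filter.Eventually.of_forall fun p => hK2sq p)]
    exact integral_const_mul _ _
  rw [hIG] at hCS1 hCS2
  rw [hIK2] at hCS2
  -- abbreviations for final estimate
  set A := ∫ p, ‖f p.2‖ ^ 2 * a p ^ 4 ∂m with hA
  set B := ∫ p, ‖f p.1 - f p.2‖ ^ 2 ∂m with hB
  set D := C ^ 2 * ∫ p, a p ^ 2 ∂m with hD
  have hB0 : 0 ≤ B := integral_nonneg fun p => by positivity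
  have hD0 : 0 ≤ D := mul_nonneg (sq_nonneg C) (integral_nonneg fun p => sq_nonneg _)
  have hsB : Real.sqrt B ≤ Real.sqrt (B + D) := Real.sqrt_le_sqrt (by linarith)
  have hsD : Real.sqrt D ≤ Real.sqrt (B + D) := Real.sqrt_le_sqrt (by linarith)
  have hsub : ∫ p, ‖u p‖ ^ 2 ∂m - ∫ p, ‖v p‖ ^ 2 ∂m =
      ∫ p, (‖u p‖ ^ 2 - ‖v p‖ ^ 2) ∂m := (integral_sub hu2 hv2).symm
  calc |(∫ p, ‖u p‖ ^ 2 ∂m) - ∫ p, ‖v p‖ ^ 2 ∂m|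
      = |∫ p, (‖u p‖ ^ 2 - ‖v p‖ ^ 2) ∂m| := by rw [hsub]
    _ ≤ ∫ p, |‖u p‖ ^ 2 - ‖v p‖ ^ 2| ∂m := by
        simpa [Real.norm_eq_abs] using
          norm_integral_le_integral_norm (μ := m) (fun p => ‖u p‖ ^ 2 - ‖v p‖ ^ 2)
    _ ≤ ∫ p, (G p * K1 p + G p * K2 p) ∂m :=
        integral_mono (hu2.sub hv2).abs (hGK1.add hGK2) hptw
    _ = (∫ p, G p * K1 p ∂m) + ∫ p, G p * K2 p ∂m := integral_add hGK1 hGK2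
    _ ≤ Real.sqrt A * Real.sqrt B + Real.sqrt A * Real.sqrt D := by
        simp only [hB, hK1def] at hCS1 ⊢
        exact add_le_add hCS1 hCS2
    _ ≤ 2 * Real.sqrt A * Real.sqrt (B + D) := by
        have hA0 : 0 ≤ Real.sqrt A := Real.sqrt_nonneg _
        nlinarith
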